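/- In the space ℝ³ with norm whose unit ball is B = conv((B²₂ × {0}) ∪ {(0,0,±1)}), the equilateral dimension is at least 4: the four points 0 and the vertices of T* = (1/√3)·T + (0,0,(√3-1)/√3) (T the Euclidean equilateral triangle with vertices (±√3/2,-1/2,0), (0,1,0)) are pairwise at distance exactly 1. -/

import Mathlib

open Set Pointwise

def diskSet : Set (Fin 3 → ℝ) := {p | p 0 ^ 2 + p 1 ^ 2 ≤ 1 ∧ p 2 = 0}

def Bcone : Set (Fin 3 → ℝ) :=
  convexHull ℝ (diskSet ∪ ({![0, 0, 1], ![0, 0, -1]} : Set (Fin 3 → ℝ)))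

noncomputable def vT : Fin 3 → (Fin 3 → ℝ) :=
  ![![Real.sqrt 3 / 2, -(1 / 2 : ℝ), 0], ![-(Real.sqrt 3 / 2), -(1 / 2 : ℝ), 0], ![0, 1, 0]]

noncomputable def wT : Fin 3 → (Fin 3 → ℝ) :=
  fun i => (1 / Real.sqrt 3) • vT i + ![0, 0, (Real.sqrt 3 - 1) / Real.sqrt 3]

lemma sq3 : Real.sqrt 3 ^ 2 = 3 := Real.sq_sqrt (by norm_num)
lemma s3pos : (0:ℝ) < Real.sqrt 3 := Real.sqrt_pos.2 (by norm_num)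

lemma fle_on_Bcone {a b c : ℝ} (hab : a ^ 2 + b ^ 2 ≤ 1) (hc : |c| ≤ 1) :
    ∀ x ∈ Bcone, a * x 0 + b * x 1 + c * x 2 ≤ 1 := by
  have hlin : IsLinearMap ℝ (fun x : Fin 3 → ℝ => a * x 0 + b * x 1 + c * x 2) := by
    constructor <;> intros <;> simp [Pi.add_apply, Pi.smul_apply] <;> ring
  have : Bcone ⊆ {x | a * x 0 + b * x 1 + c * x 2 ≤ 1} := by
    apply convexHull_min _ (convex_halfSpace_le hlin 1)
    rintro x (⟨h1, h2⟩ | hx)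
    · simp only [mem_setOf_eq, h2, mul_zero, add_zero]
      nlinarith [sq_nonneg (a * x 1 - b * x 0), sq_nonneg (a * x 0 + b * x 1),
        sq_nonneg a, sq_nonneg b, sq_nonneg (x 0), sq_nonneg (x 1)]
    · rcases hx with rfl | rfl <;> simp <;> cases abs_le.1 hc <;> linarith [abs_le.1 hc]
  exact fun x hx => this hx

lemma gauge_cone_eq_one {a b c : ℝ} (hab : a ^ 2 + b ^ 2 ≤ 1) (hc : |c| ≤ 1)
    {v : Fin 3 → ℝ} (hv : v ∈ Bcone) (hfv : a * v 0 + b * v 1 + c * v 2 = 1) :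
    gauge Bcone v = 1 := by
  refine le_antisymm (gauge_le_one_of_mem hv) ?_
  rw [gauge]
  have hne : {r : ℝ | 0 < r ∧ v ∈ r • Bcone}.Nonempty := ⟨1, one_pos, by simpa using hv⟩
  apply le_csInf hne
  rintro r ⟨hr, w, hw, rfl⟩
  have h1 := fle_on_Bcone hab hc w hw
  have : a * (r • w) 0 + b * (r • w) 1 + c * (r • w) 2 = r * (a * w 0 + b * w 1 + c * w 2) := by
    simp [Pi.smul_apply]; ring
  rw [this] at hfv
  nlinarith

lemma gauge_disk {a b : ℝ} (hab : a ^ 2 + b ^ 2 = 1) : gauge Bcone ![a, b, 0] = 1 := by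
  have hv : ![a, b, 0] ∈ Bcone :=
    subset_convexHull ℝ _ (mem_union_left _ ⟨by simpa using hab.le, by simp⟩)
  apply gauge_cone_eq_one (a := a) (b := b) (c := 0) hab.le (by simp) hv
  simp
  linear_combination hab

/-- The equilateral dimension of the double-cone space is at least 4: the origin together
with the three vertices of `T⋆` are pairwise at gauge distance exactly 1. -/
theorem equilateral_dimension_cone_ge_four :
    (∀ i, gauge Bcone ((0 : Fin 3 → ℝ) - wT i) = 1) ∧
    (∀ i j, i ≠ j → gauge Bcone (wT i - wT j) = 1) := by
  have h3 := sq3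
  have hp := s3pos
  have hge : (1:ℝ) ≤ Real.sqrt 3 := by nlinarith
  have hne : Real.sqrt 3 ≠ 0 := ne_of_gt hp
  constructor
  · -- part 1
    have key : ∀ d : Fin 3 → ℝ, d ∈ diskSet →
        (1 / Real.sqrt 3) • d + ((Real.sqrt 3 - 1) / Real.sqrt 3) • ![0, 0, (-1:ℝ)] ∈ Bcone := by
      intro d hd
      rw [Bcone]
      have hm1 : d ∈ diskSet ∪ ({![0, 0, 1], ![0, 0, -1]} : Set (Fin 3 → ℝ)) :=
        mem_union_left _ hd
      have hm2 : ![0, 0, (-1:ℝ)] ∈ diskSet ∪ ({![0, 0, 1], ![0, 0, -1]} : Set (Fin 3 → ℝ)) :=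
        mem_union_right _ (by simp)
      exact (convex_convexHull ℝ _) (subset_convexHull ℝ _ hm1) (subset_convexHull ℝ _ hm2)
        (by positivity) (div_nonneg (by linarith) hp.le) (by field_simp; ring)
    intro i
    fin_cases i
    · have hd : ![-(Real.sqrt 3 / 2), (1:ℝ)/2, 0] ∈ diskSet := by
        constructor <;> simp <;> nlinarith
      have hveq : (0 : Fin 3 → ℝ) - wT 0 =
          (1 / Real.sqrt 3) • ![-(Real.sqrt 3 / 2), (1:ℝ)/2, 0]
            + ((Real.sqrt 3 - 1) / Real.sqrt 3) • ![0, 0, (-1:ℝ)] := by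
        funext k; fin_cases k <;> simp [wT, vT] <;> field_simp <;> ring
      show gauge Bcone ((0 : Fin 3 → ℝ) - wT 0) = 1
      rw [hveq]
      apply gauge_cone_eq_one (a := -(Real.sqrt 3 / 2)) (b := (1:ℝ)/2) (c := -1)
        (by nlinarith) (by rw [abs_neg, abs_one]) (key _ hd)
      simp
      field_simp
      linear_combination h3
    · have hd : ![Real.sqrt 3 / 2, (1:ℝ)/2, 0] ∈ diskSet := by
        constructor <;> simp <;> nlinarith
      have hveq : (0 : Fin 3 → ℝ) - wT 1 =
          (1 / Real.sqrt 3) • ![Real.sqrt 3 / 2, (1:ℝ)/2, 0]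
            + ((Real.sqrt 3 - 1) / Real.sqrt 3) • ![0, 0, (-1:ℝ)] := by
        funext k; fin_cases k <;> simp [wT, vT] <;> field_simp <;> ring
      show gauge Bcone ((0 : Fin 3 → ℝ) - wT 1) = 1
      rw [hveq]
      apply gauge_cone_eq_one (a := Real.sqrt 3 / 2) (b := (1:ℝ)/2) (c := -1)
        (by nlinarith) (by rw [abs_neg, abs_one]) (key _ hd)
      simp
      field_simp
      linear_combination h3
    · have hd : ![(0:ℝ), -1, 0] ∈ diskSet := by constructor <;> simp
      have hveq : (0 : Fin 3 → ℝ) - wT 2 =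
          (1 / Real.sqrt 3) • ![(0:ℝ), -1, 0]
            + ((Real.sqrt 3 - 1) / Real.sqrt 3) • ![0, 0, (-1:ℝ)] := by
        funext k; fin_cases k <;> simp [wT, vT] <;> field_simp
      show gauge Bcone ((0 : Fin 3 → ℝ) - wT 2) = 1
      rw [hveq]
      apply gauge_cone_eq_one (a := (0:ℝ)) (b := -1) (c := -1)
        (by norm_num) (by rw [abs_neg, abs_one]) (key _ hd)
      simp
      field_simp; ring
  · intro i j hij
    have e01 : wT 0 - wT 1 = ![(1:ℝ), 0, 0] := by
      funext k; fin_cases k <;> simp [wT, vT] <;> field_simp <;> nlinarith [h3, hp]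
    have e02 : wT 0 - wT 2 = ![(1:ℝ)/2, -(Real.sqrt 3 / 2), 0] := by
      funext k; fin_cases k <;> simp [wT, vT] <;> field_simp <;> nlinarith [h3, hp]
    have e12 : wT 1 - wT 2 = ![-((1:ℝ)/2), -(Real.sqrt 3 / 2), 0] := by
      funext k; fin_cases k <;> simp [wT, vT] <;> field_simp <;> nlinarith [h3, hp]
    have e10 : wT 1 - wT 0 = ![(-1:ℝ), 0, 0] := by
      funext k; fin_cases k <;> simp [wT, vT] <;> field_simp <;> nlinarith [h3, hp]
    have e20 : wT 2 - wT 0 = ![-((1:ℝ)/2), Real.sqrt 3 / 2, 0] := by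
      funext k; fin_cases k <;> simp [wT, vT] <;> field_simp <;> nlinarith [h3, hp]
    have e21 : wT 2 - wT 1 = ![(1:ℝ)/2, Real.sqrt 3 / 2, 0] := by
      funext k; fin_cases k <;> simp [wT, vT] <;> field_simp <;> nlinarith [h3, hp]
    fin_cases i <;> fin_cases j <;> simp_all
    · exact gauge_disk (by norm_num)
    · exact gauge_disk (by linear_combination sq3 / 4)
    · exact gauge_disk (by norm_num)
    · exact gauge_disk (by linear_combination sq3 / 4)
    · exact gauge_disk (by linear_combination sq3 / 4)
    · exact gauge_disk (by linear_combination sq3 / 4)
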